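/- Let (Ω, P) be a probability space, let X : Ω → ℝ be an integrable random variable, let τ ∈ (0, 1), and let q ∈ ℝ satisfy P(X ≤ q) = τ and P(X = q) = 0. Define h(y) = ∫ ( y − (1/τ) · max(y − X(ω), 0) ) dP(ω). Then IsGreatest (Set.range h) ( (1/τ) · ∫_{ {ω : X(ω) ≤ q} } X(ω) dP(ω) ); that is, h(q) = (1/τ)·E[X·1_{X ≤ q}] and h(y) ≤ h(q) for all y ∈ ℝ. -/

import Mathlib

open MeasureTheory

theorem rockafellar_uryasev_representation
    {Ω : Type*} [MeasurableSpace Ω] (P : Measure Ω) [IsProbabilityMeasure P]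
    (X : Ω → ℝ) (hX : Integrable X P)
    (τ : ℝ) (hτ : τ ∈ Set.Ioo (0 : ℝ) 1)
    (q : ℝ) (hq : P {ω | X ω ≤ q} = ENNReal.ofReal τ)
    (hq0 : P {ω | X ω = q} = 0)
    (h : ℝ → ℝ)
    (hh : ∀ y, h y = ∫ ω, (y - (1 / τ) * max (y - X ω) 0) ∂P) :
    IsGreatest (Set.range h) ((1 / τ) * ∫ ω in {ω | X ω ≤ q}, X ω ∂P) := by
  obtain ⟨hτ0, hτ1⟩ := hτ
  have hτne : τ ≠ 0 := ne_of_gt hτ0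
  -- measurable modification of X
  set X' : Ω → ℝ := hX.1.mk X with hX'def
  have hX'sm : StronglyMeasurable X' := hX.1.stronglyMeasurable_mk
  have hXX' : X =ᵐ[P] X' := hX.1.ae_eq_mk
  have hX'int : Integrable X' P := hX.congr hXX'
  set s : Set Ω := {ω | X' ω ≤ q} with hs
  have hsm : MeasurableSet s := measurableSet_le hX'sm.measurable measurable_const
  have hseq : {ω | X ω ≤ q} =ᵐ[P] s := by
    rw [Filter.eventuallyEq_set]
    filter_upwards [hXX'] with ω hω
    simp only [Set.mem_setOf_eq, hs, hω]
  have hPs : P s = ENNReal.ofReal τ := by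
    rw [← measure_congr hseq, hq]
  have hPst : (P s).toReal = τ := by rw [hPs, ENNReal.toReal_ofReal hτ0.le]
  -- integrability of positive parts
  have hGXint : ∀ y : ℝ, Integrable (fun ω => max (y - X ω) 0) P :=
    fun y => ((integrable_const y).sub hX).pos_part
  have hGint : ∀ y : ℝ, Integrable (fun ω => max (y - X' ω) 0) P :=
    fun y => ((integrable_const y).sub hX'int).pos_part
  set G : ℝ → ℝ := fun y => ∫ ω, max (y - X' ω) 0 ∂P with hG
  have hGeq : ∀ y : ℝ, ∫ ω, max (y - X ω) 0 ∂P = G y := by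
    intro y
    refine integral_congr_ae ?_
    filter_upwards [hXX'] with ω hω
    rw [hω]
  -- formula for h
  have hhy : ∀ y : ℝ, h y = y - (1 / τ) * G y := by
    intro y
    rw [hh, integral_sub (integrable_const y) ((hGXint y).const_mul _), integral_const,
      integral_const_mul, hGeq]
    simp
  -- indicator integral
  have hind : ∫ ω, s.indicator (fun _ => (1 : ℝ)) ω ∂P = τ := by
    rw [integral_indicator_const (1 : ℝ) hsm, measureReal_def, hPst]; simp
  -- compute G q
  have hGq : G q = q * τ - ∫ ω in s, X' ω ∂P := by
    have h1 : (fun ω => max (q - X' ω) 0) = s.indicator (fun ω => q - X' ω) := by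
      funext ω
      by_cases hω : X' ω ≤ q
      · have hωs : ω ∈ s := hω
        rw [Set.indicator_of_mem hωs, max_eq_left (by linarith)]
      · have hωs : ω ∉ s := hω
        rw [Set.indicator_of_notMem hωs, max_eq_right (by push_neg at hω; linarith)]
    rw [hG]
    simp only [h1]
    rw [integral_indicator hsm,
      integral_sub (integrable_const q).restrict hX'int.restrict, integral_const]
    simp [measureReal_def, hPst, Measure.restrict_apply_univ, mul_comm]
  -- the target value equals h q
  have hval : ∫ ω in {ω | X ω ≤ q}, X ω ∂P = ∫ ω in s, X' ω ∂P := by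
    rw [Measure.restrict_congr_set hseq]
    exact integral_congr_ae (ae_restrict_of_ae hXX')
  have hhq : h q = (1 / τ) * ∫ ω in {ω | X ω ≤ q}, X ω ∂P := by
    rw [hhy, hGq, hval]
    field_simp
    ring
  -- key inequality: G q + (y - q) * τ ≤ G y
  have hkey : ∀ y : ℝ, G q + (y - q) * τ ≤ G y := by
    intro y
    have hmono : ∫ ω, (max (q - X' ω) 0 + (y - q) * s.indicator (fun _ => (1:ℝ)) ω) ∂P
        ≤ ∫ ω, max (y - X' ω) 0 ∂P := by
      refine integral_mono ((hGint q).add (((integrable_const (1:ℝ)).indicator hsm).const_mul _))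
        (hGint y) ?_
      intro ω
      by_cases hω : X' ω ≤ q
      · have hωs : ω ∈ s := hω
        have : s.indicator (fun _ => (1:ℝ)) ω = 1 := Set.indicator_of_mem hωs _
        simp only [this]
        have h1 : max (q - X' ω) 0 = q - X' ω := max_eq_left (by linarith)
        have h2 : y - X' ω ≤ max (y - X' ω) 0 := le_max_left _ _
        simp only [h1]
        linarith
      · have hωs : ω ∉ s := hω
        have : s.indicator (fun _ => (1:ℝ)) ω = 0 := Set.indicator_of_notMem hωs _
        simp only [this, mul_zero, add_zero]
        push_neg at hω
        have h1 : max (q - X' ω) 0 = 0 := max_eq_right (by linarith)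
        simp only [h1]
        exact le_max_right _ _
    rw [integral_add (hGint q) (((integrable_const (1:ℝ)).indicator hsm).const_mul _),
      integral_const_mul] at hmono
    have : ∫ ω, s.indicator (fun _ => (1:ℝ)) ω ∂P = τ := hind
    rw [this] at hmono
    exact hmono
  constructor
  · exact ⟨q, hhq⟩
  · rintro z ⟨y, rfl⟩
    rw [← hhq, hhy y, hhy q]
    have hk := hkey y
    have h1τ : (0:ℝ) < 1 / τ := by positivity
    have h2 : (1/τ) * (G q + (y - q) * τ) ≤ (1/τ) * G y :=
      mul_le_mul_of_nonneg_left hk h1τ.le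
    rw [mul_add] at h2
    have e : (1/τ) * ((y - q) * τ) = y - q := by field_simp
    rw [e] at h2
    linarith
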